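/- (Theorem 3.3, combined bound.) Under the hypotheses of the previous statement — κ̂, κ* Markov kernels on X; μ̂ invariant for κ̂; μ* invariant for κ*; μ_b a probability measure on X; G a nonempty class of measurable g with |g| ≤ G_max; Φg bounded by F satisfying Φg = g + κ̂Φg − ∫g dμ̂ pointwise; e_g := κ̂Φg − κ*Φg; Ψg bounded measurable satisfying Ψg = e_g + κ*Ψg − ∫ e_g dμ* pointwise; KL(κ*(x)‖κ̂(x)) < ∞ for μ_b-a.e. x with x ↦ √(2·KL(κ*(x)‖κ̂(x))) μ_b-integrable — it holds that sup_{g ∈ G} | ∫ g dμ_b − ∫ g dμ* | ≤ sup_{g ∈ G} | ∫ Φg dμ_b − ∫ (κ̂ Φg)(x) dμ_b(x) | + F · ∫ √(2 · KL(κ*(x)‖κ̂(x))) dμ_b(x) + sup_{g ∈ G} | ∫ Ψg dμ_b − ∫ (κ* Ψg)(x) dμ_b(x) |. -/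

import Mathlib

open MeasureTheory ProbabilityTheory Classical
open scoped ENNReal

/-- The Kullback–Leibler divergence `KL(P‖Q)`: equal to `∫ log (dP/dQ) dP` when `P ≪ Q`
and this integral makes sense, and `+∞` otherwise. -/
noncomputable def KLdiv {S : Type*} [MeasurableSpace S] (P Q : Measure S) : ℝ≥0∞ :=
  if P ≪ Q ∧ Integrable (fun s => Real.log ((P.rnDeriv Q s).toReal)) P then
    ENNReal.ofReal (∫ s, Real.log ((P.rnDeriv Q s).toReal) ∂P)
  else ⊤


private lemma log_ge_one_sub_inv {x : ℝ} (hx : 0 < x) : 1 - x⁻¹ ≤ Real.log x := by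
  have h := Real.log_le_sub_one_of_pos (inv_pos.mpr hx)
  rw [Real.log_inv] at h
  linarith

private lemma g_nonpos_nonneg :
    (∀ x : ℝ, 0 < x → x ≤ 1 → (x + 1) * Real.log x - 2 * (x - 1) ≤ 0) ∧
    (∀ x : ℝ, 1 ≤ x → 0 ≤ (x + 1) * Real.log x - 2 * (x - 1)) := by
  set g : ℝ → ℝ := fun x => (x + 1) * Real.log x - 2 * (x - 1) with hg
  have hderiv : ∀ y : ℝ, 0 < y →
      HasDerivAt g (Real.log y + (y + 1) * y⁻¹ - 2) y := by
    intro y hy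
    have h1 : HasDerivAt (fun x : ℝ => (x + 1) * Real.log x)
        (1 * Real.log y + (y + 1) * y⁻¹) y :=
      ((hasDerivAt_id y).add_const 1).mul (Real.hasDerivAt_log (ne_of_gt hy))
    have h2 : HasDerivAt (fun x : ℝ => 2 * (x - 1)) 2 y := by
      simpa using ((hasDerivAt_id y).sub_const 1).const_mul 2
    exact (h1.sub h2).congr_deriv (by ring)
  have hd_nonneg : ∀ y : ℝ, 0 < y → 0 ≤ Real.log y + (y + 1) * y⁻¹ - 2 := by
    intro y hy
    have h1 := log_ge_one_sub_inv hy
    have h2 : (y + 1) * y⁻¹ = 1 + y⁻¹ := by field_simp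
    rw [h2]; linarith
  have hmono : MonotoneOn g (Set.Ioi (0:ℝ)) := by
    refine monotoneOn_of_deriv_nonneg (convex_Ioi 0) ?_ ?_ ?_
    · intro y hy
      exact ((hderiv y hy).continuousAt).continuousWithinAt
    · rw [interior_Ioi]
      intro y hy
      exact ((hderiv y hy).differentiableAt).differentiableWithinAt
    · rw [interior_Ioi]
      intro y hy
      rw [(hderiv y hy).deriv]
      exact hd_nonneg y hy
  have hg1 : g 1 = 0 := by simp [hg]
  constructor
  · intro x hx hx1
    have := hmono (Set.mem_Ioi.mpr hx) (Set.mem_Ioi.mpr one_pos) hx1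
    rwa [hg1] at this
  · intro x hx
    have := hmono (Set.mem_Ioi.mpr one_pos) (Set.mem_Ioi.mpr (lt_of_lt_of_le one_pos hx)) hx
    rwa [hg1] at this

private lemma key_ineq {x : ℝ} (hx : 0 ≤ x) :
    3 * (x - 1) ^ 2 ≤ (2 * x + 4) * (x * Real.log x - x + 1) := by
  rcases eq_or_lt_of_le hx with rfl | hx
  · simp [Real.log_zero]; norm_num
  set h : ℝ → ℝ := fun x => (2 * x + 4) * (x * Real.log x - x + 1) - 3 * (x - 1) ^ 2 with hh
  suffices hs : 0 ≤ h x by simpa [hh] using hs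
  have hcont : Continuous h := by
    have : Continuous fun x : ℝ => x * Real.log x := Real.continuous_mul_log
    continuity
  have hderiv : ∀ y : ℝ, 0 < y →
      HasDerivAt h (4 * ((y + 1) * Real.log y - 2 * (y - 1))) y := by
    intro y hy
    have h1 : HasDerivAt (fun x : ℝ => x * Real.log x) (Real.log y + 1) y := by
      have := (hasDerivAt_id y).mul (Real.hasDerivAt_log (ne_of_gt hy))
      exact this.congr_deriv (by simp [ne_of_gt hy])
    have h2 : HasDerivAt (fun x : ℝ => x * Real.log x - x + 1) (Real.log y + 1 - 1) y :=
      (h1.sub (hasDerivAt_id y)).add_const 1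
    have h3 : HasDerivAt (fun x : ℝ => 2 * x + 4) 2 y := by
      simpa using ((hasDerivAt_id y).const_mul 2).add_const 4
    have h4 : HasDerivAt (fun x : ℝ => (2 * x + 4) * (x * Real.log x - x + 1))
        (2 * (y * Real.log y - y + 1) + (2 * y + 4) * (Real.log y + 1 - 1)) y := h3.mul h2
    have h5 : HasDerivAt (fun x : ℝ => 3 * (x - 1) ^ 2) (3 * (2 * (y - 1))) y := by
      simpa using (((hasDerivAt_id y).sub_const 1).pow 2).const_mul 3
    have h6 := h4.sub h5
    refine h6.congr_deriv ?_
    ring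
  obtain ⟨hgle, hgge⟩ := g_nonpos_nonneg
  have h1 : h 1 = 0 := by simp [hh]
  rcases le_or_gt x 1 with hx1 | hx1
  · -- antitone on [x, 1]
    have hanti : AntitoneOn h (Set.Icc x 1) := by
      refine antitoneOn_of_deriv_nonpos (convex_Icc x 1) hcont.continuousOn ?_ ?_
      · intro y hy
        rw [interior_Icc] at hy
        exact ((hderiv y (lt_trans hx hy.1)).differentiableAt).differentiableWithinAt
      · intro y hy
        rw [interior_Icc] at hy
        have hy0 : 0 < y := lt_trans hx hy.1
        rw [(hderiv y hy0).deriv]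
        have := hgle y hy0 (le_of_lt hy.2)
        linarith
    have := hanti (Set.mem_Icc.mpr ⟨le_rfl, hx1⟩) (Set.mem_Icc.mpr ⟨hx1, le_rfl⟩) hx1
    rwa [h1] at this
  · have hmono : MonotoneOn h (Set.Icc 1 x) := by
      refine monotoneOn_of_deriv_nonneg (convex_Icc 1 x) hcont.continuousOn ?_ ?_
      · intro y hy
        rw [interior_Icc] at hy
        exact ((hderiv y (lt_trans one_pos hy.1)).differentiableAt).differentiableWithinAt
      · intro y hy
        rw [interior_Icc] at hy
        rw [(hderiv y (lt_trans one_pos hy.1)).deriv]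
        have := hgge y (le_of_lt hy.1)
        linarith
    have := hmono (Set.mem_Icc.mpr ⟨le_rfl, le_of_lt hx1⟩)
      (Set.mem_Icc.mpr ⟨le_of_lt hx1, le_rfl⟩) (le_of_lt hx1)
    rwa [h1] at this

private lemma phi_nonneg {x : ℝ} (hx : 0 ≤ x) : 0 ≤ x * Real.log x - x + 1 := by
  have h := key_ineq hx
  have h2 : (0:ℝ) < 2 * x + 4 := by linarith
  nlinarith [sq_nonneg (x - 1)]

private lemma integrable_of_bounded {S : Type*} [MeasurableSpace S] {μ : Measure S}
    [IsFiniteMeasure μ] {f : S → ℝ} (hf : AEStronglyMeasurable f μ) {C : ℝ}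
    (hC : ∀ x, |f x| ≤ C) : Integrable f μ :=
  Integrable.mono' (integrable_const C) hf
    (Filter.Eventually.of_forall fun x => by rw [Real.norm_eq_abs]; exact hC x)

private lemma pinsker_l1 {S : Type*} [MeasurableSpace S] (P Q : Measure S)
    [IsProbabilityMeasure P] [IsProbabilityMeasure Q] (hPQ : P ≪ Q)
    (hint : Integrable (fun s => Real.log ((P.rnDeriv Q s).toReal)) P) :
    (0 ≤ ∫ s, Real.log ((P.rnDeriv Q s).toReal) ∂P) ∧
    ∫ s, |(P.rnDeriv Q s).toReal - 1| ∂Q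
      ≤ Real.sqrt (2 * ∫ s, Real.log ((P.rnDeriv Q s).toReal) ∂P) := by
  set ρ : S → ℝ := fun s => (P.rnDeriv Q s).toReal with hρ
  have hρ_meas : Measurable ρ := (Measure.measurable_rnDeriv P Q).ennreal_toReal
  have hρ_nonneg : ∀ s, 0 ≤ ρ s := fun s => ENNReal.toReal_nonneg
  have hρ_int : Integrable ρ Q := Measure.integrable_toReal_rnDeriv
  have hρ_one : ∫ s, ρ s ∂Q = 1 := by
    rw [hρ, Measure.integral_toReal_rnDeriv hPQ]; simp
  -- change of variables
  have hchg : ∫ s, ρ s * Real.log (ρ s) ∂Q = ∫ s, Real.log (ρ s) ∂P := by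
    simpa [smul_eq_mul] using integral_rnDeriv_smul (f := fun s => Real.log (ρ s)) hPQ
  have hρlog_int : Integrable (fun s => ρ s * Real.log (ρ s)) Q := by
    have := (integrable_rnDeriv_smul_iff (f := fun s => Real.log (ρ s)) hPQ).mpr hint
    simpa [smul_eq_mul] using this
  set KL : ℝ := ∫ s, Real.log (ρ s) ∂P with hKL
  -- φ(ρ) and its integral
  set φ : S → ℝ := fun s => ρ s * Real.log (ρ s) - ρ s + 1 with hφ
  have hφ_meas : Measurable φ :=
    ((hρ_meas.mul (hρ_meas.log)).sub hρ_meas).add_const 1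
  have hφ_nonneg : ∀ s, 0 ≤ φ s := fun s => phi_nonneg (hρ_nonneg s)
  have hφ_int : Integrable φ Q := ((hρlog_int.sub hρ_int).add (integrable_const 1))
  have hφ_integral : ∫ s, φ s ∂Q = KL := by
    have h1 : ∫ s, φ s ∂Q = ∫ s, (ρ s * Real.log (ρ s) - ρ s) ∂Q + ∫ _s, (1:ℝ) ∂Q :=
      integral_add (hρlog_int.sub hρ_int) (integrable_const 1)
    rw [h1, integral_sub hρlog_int hρ_int, hchg, hρ_one, integral_const]
    simp
  have hKL_nonneg : 0 ≤ KL := by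
    rw [← hφ_integral]; exact integral_nonneg hφ_nonneg
  refine ⟨hKL_nonneg, ?_⟩
  -- Cauchy-Schwarz setup
  set A : S → ℝ := fun s => 3 * (ρ s - 1) ^ 2 / (2 * ρ s + 4) with hA
  set B : S → ℝ := fun s => (2 * ρ s + 4) / 3 with hB
  have hden_pos : ∀ s, (0:ℝ) < 2 * ρ s + 4 := fun s => by have := hρ_nonneg s; linarith
  have hA_nonneg : ∀ s, 0 ≤ A s := fun s =>
    div_nonneg (by positivity) (le_of_lt (hden_pos s))
  have hB_nonneg : ∀ s, 0 ≤ B s := fun s => by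
    have := hρ_nonneg s; rw [hB]; positivity
  have hA_le : ∀ s, A s ≤ φ s := fun s => by
    rw [hA, div_le_iff₀ (hden_pos s)]
    have := key_ineq (hρ_nonneg s)
    calc 3 * (ρ s - 1) ^ 2 ≤ (2 * ρ s + 4) * (ρ s * Real.log (ρ s) - ρ s + 1) := this
    _ = φ s * (2 * ρ s + 4) := by rw [hφ]; ring
  have hA_meas : Measurable A := by
    apply Measurable.div
    · exact (((hρ_meas.sub_const 1).pow_const 2).const_mul 3)
    · exact (hρ_meas.const_mul 2).add_const 4
  have hB_meas : Measurable B := ((hρ_meas.const_mul 2).add_const 4).div_const 3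
  have hA_int : Integrable A Q := by
    refine Integrable.mono' hφ_int hA_meas.aestronglyMeasurable
      (Filter.Eventually.of_forall fun s => ?_)
    rw [Real.norm_eq_abs, abs_of_nonneg (hA_nonneg s)]
    exact hA_le s
  have hB_int : Integrable B Q := ((hρ_int.const_mul 2).add (integrable_const 4)).div_const 3
  have hB_integral : ∫ s, B s ∂Q = 2 := by
    have h1 : ∫ s, B s ∂Q = (∫ s, (2 * ρ s + 4) ∂Q) / 3 := integral_div 3 _
    have h2 : ∫ s, (2 * ρ s + 4) ∂Q = ∫ s, 2 * ρ s ∂Q + ∫ _s, (4:ℝ) ∂Q :=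
      integral_add (hρ_int.const_mul 2) (integrable_const 4)
    rw [h1, h2, integral_const_mul, hρ_one, integral_const]
    simp
    norm_num
  have hu_meas : Measurable fun s => Real.sqrt (A s) := hA_meas.sqrt
  have hv_meas : Measurable fun s => Real.sqrt (B s) := hB_meas.sqrt
  have hu2 : (fun s => Real.sqrt (A s) ^ 2) = A := funext fun s => Real.sq_sqrt (hA_nonneg s)
  have hv2 : (fun s => Real.sqrt (B s) ^ 2) = B := funext fun s => Real.sq_sqrt (hB_nonneg s)
  have two_eq : ENNReal.ofReal (2:ℝ) = 2 := by norm_num [ENNReal.ofReal_ofNat]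
  have hMu : MemLp (fun s => Real.sqrt (A s)) (ENNReal.ofReal 2) Q := by
    rw [two_eq]
    refine (memLp_two_iff_integrable_sq hu_meas.aestronglyMeasurable).mpr ?_
    rw [hu2]; exact hA_int
  have hMv : MemLp (fun s => Real.sqrt (B s)) (ENNReal.ofReal 2) Q := by
    rw [two_eq]
    refine (memLp_two_iff_integrable_sq hv_meas.aestronglyMeasurable).mpr ?_
    rw [hv2]; exact hB_int
  have hpq : Real.HolderConjugate 2 2 := .two_two
  have hCS := integral_mul_le_Lp_mul_Lq_of_nonneg hpq
    (Filter.Eventually.of_forall fun s => Real.sqrt_nonneg (A s))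
    (Filter.Eventually.of_forall fun s => Real.sqrt_nonneg (B s)) hMu hMv
  have habs : ∫ s, |ρ s - 1| ∂Q = ∫ s, Real.sqrt (A s) * Real.sqrt (B s) ∂Q := by
    refine integral_congr_ae (Filter.Eventually.of_forall fun s => ?_)
    have hAB : A s * B s = (ρ s - 1) ^ 2 := by
      rw [hA, hB]
      have hne := (hden_pos s).ne'
      dsimp only
      rw [div_mul_div_comm, div_eq_iff (mul_ne_zero hne (by norm_num))]
      try ring
    have h : Real.sqrt (A s) * Real.sqrt (B s) = |ρ s - 1| := by
      rw [← Real.sqrt_mul (hA_nonneg s) (B s), hAB, Real.sqrt_sq_eq_abs]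
    exact h.symm
  have hrpow2 : ∀ (f : S → ℝ), (fun s => f s ^ (2:ℝ)) = fun s => f s ^ (2:ℕ) := by
    intro f
    funext s
    rw [show (2:ℝ) = ((2:ℕ):ℝ) by norm_num, Real.rpow_natCast]
  have hCS' : ∫ s, Real.sqrt (A s) * Real.sqrt (B s) ∂Q
      ≤ (∫ s, A s ∂Q) ^ ((1:ℝ)/2) * (2:ℝ) ^ ((1:ℝ)/2) := by
    calc ∫ s, Real.sqrt (A s) * Real.sqrt (B s) ∂Q
        ≤ (∫ s, Real.sqrt (A s) ^ (2:ℝ) ∂Q) ^ ((1:ℝ)/2)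
          * (∫ s, Real.sqrt (B s) ^ (2:ℝ) ∂Q) ^ ((1:ℝ)/2) := hCS
      _ = (∫ s, A s ∂Q) ^ ((1:ℝ)/2) * (2:ℝ) ^ ((1:ℝ)/2) := by
          rw [show (fun s => Real.sqrt (A s) ^ (2:ℝ)) = A by rw [hrpow2, hu2],
            show (fun s => Real.sqrt (B s) ^ (2:ℝ)) = B by rw [hrpow2, hv2], hB_integral]
  have hIA_nonneg : 0 ≤ ∫ s, A s ∂Q := integral_nonneg hA_nonneg
  have hIA_le : ∫ s, A s ∂Q ≤ KL := by
    rw [← hφ_integral]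
    exact integral_mono hA_int hφ_int hA_le
  show ∫ s, |ρ s - 1| ∂Q ≤ Real.sqrt (2 * KL)
  calc ∫ s, |ρ s - 1| ∂Q ≤ (∫ s, A s ∂Q) ^ ((1:ℝ)/2) * (2:ℝ) ^ ((1:ℝ)/2) := by
        rw [habs]; exact hCS'
    _ ≤ KL ^ ((1:ℝ)/2) * (2:ℝ) ^ ((1:ℝ)/2) := by
        have := Real.rpow_le_rpow hIA_nonneg hIA_le (by norm_num : (0:ℝ) ≤ 1/2)
        exact mul_le_mul_of_nonneg_right this (Real.rpow_nonneg (by norm_num) _)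
    _ = Real.sqrt (2 * KL) := by
        rw [Real.sqrt_eq_rpow, Real.mul_rpow (by norm_num) hKL_nonneg]
        ring

private lemma abs_integral_le_of_bounded {S : Type*} [MeasurableSpace S] {μ : Measure S}
    [IsProbabilityMeasure μ] {f : S → ℝ} {C : ℝ} (hC : ∀ x, |f x| ≤ C) :
    |∫ x, f x ∂μ| ≤ C := by
  have := norm_integral_le_of_norm_le_const (μ := μ) (f := f)
    (Filter.Eventually.of_forall fun x => by rw [Real.norm_eq_abs]; exact hC x)
  simpa [Real.norm_eq_abs, measure_univ] using this

private lemma pinsker_bound {S : Type*} [MeasurableSpace S] (P Q : Measure S)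
    [IsProbabilityMeasure P] [IsProbabilityMeasure Q] {f : S → ℝ} (hf : Measurable f)
    {F : ℝ} (hF : 0 ≤ F) (hb : ∀ s, |f s| ≤ F) (hfin : KLdiv P Q < ⊤) :
    |(∫ s, f s ∂Q) - ∫ s, f s ∂P| ≤ F * Real.sqrt (2 * (KLdiv P Q).toReal) := by
  have hcond : P ≪ Q ∧ Integrable (fun s => Real.log ((P.rnDeriv Q s).toReal)) P := by
    by_contra hc
    rw [KLdiv, if_neg hc] at hfin
    exact absurd hfin (lt_irrefl ⊤)
  obtain ⟨hPQ, hint⟩ := hcond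
  obtain ⟨hKL0, hL1⟩ := pinsker_l1 P Q hPQ hint
  have hKLval : (KLdiv P Q).toReal = ∫ s, Real.log ((P.rnDeriv Q s).toReal) ∂P := by
    rw [KLdiv, if_pos ⟨hPQ, hint⟩, ENNReal.toReal_ofReal hKL0]
  set ρ : S → ℝ := fun s => (P.rnDeriv Q s).toReal with hρ
  have hρ_meas : Measurable ρ := (Measure.measurable_rnDeriv P Q).ennreal_toReal
  have hρ_int : Integrable ρ Q := Measure.integrable_toReal_rnDeriv
  have hf_intQ : Integrable f Q := integrable_of_bounded hf.aestronglyMeasurable hb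
  have hf_intP : Integrable f P := integrable_of_bounded hf.aestronglyMeasurable hb
  have hρf_int : Integrable (fun s => ρ s * f s) Q := by
    have := (integrable_rnDeriv_smul_iff (f := f) hPQ).mpr hf_intP
    simpa [smul_eq_mul] using this
  have hch : ∫ s, f s ∂P = ∫ s, ρ s * f s ∂Q := by
    have := integral_rnDeriv_smul (f := f) hPQ
    simpa [smul_eq_mul] using this.symm
  have hdiff : (∫ s, f s ∂Q) - ∫ s, f s ∂P = ∫ s, (f s - ρ s * f s) ∂Q := by
    rw [hch, ← integral_sub hf_intQ hρf_int]
  rw [hdiff]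
  have habs_int : Integrable (fun s => F * |ρ s - 1|) Q :=
    ((hρ_int.sub (integrable_const 1)).abs.const_mul F)
  calc |∫ s, (f s - ρ s * f s) ∂Q| ≤ ∫ s, |f s - ρ s * f s| ∂Q := by
        simpa [Real.norm_eq_abs] using
          norm_integral_le_integral_norm (μ := Q) (fun s => f s - ρ s * f s)
    _ ≤ ∫ s, F * |ρ s - 1| ∂Q := by
        refine integral_mono (hf_intQ.sub hρf_int).abs habs_int fun s => ?_
        have h1 : f s - ρ s * f s = (1 - ρ s) * f s := by ring
        rw [h1, abs_mul]
        have h2 : |1 - ρ s| = |ρ s - 1| := abs_sub_comm 1 (ρ s)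
        rw [h2, mul_comm]
        exact mul_le_mul_of_nonneg_right (hb s) (abs_nonneg _)
    _ = F * ∫ s, |ρ s - 1| ∂Q := integral_const_mul F _
    _ ≤ F * Real.sqrt (2 * (KLdiv P Q).toReal) := by
        rw [hKLval]
        exact mul_le_mul_of_nonneg_left hL1 hF

private lemma measurable_kernel_integral {X : Type*} [MeasurableSpace X] (κ : Kernel X X)
    [IsMarkovKernel κ] {f : X → ℝ} (hf : Measurable f) :
    Measurable fun x => ∫ y, f y ∂κ x := by
  have h : StronglyMeasurable (Function.uncurry fun (_ : X) (y : X) => f y) :=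
    (hf.comp measurable_snd).stronglyMeasurable
  exact (MeasureTheory.StronglyMeasurable.integral_kernel_prod_right (κ := κ) h).measurable

private lemma integral_invariant {X : Type*} [MeasurableSpace X] {κ : Kernel X X}
    [IsMarkovKernel κ] {μ : Measure X} [IsProbabilityMeasure μ]
    (hinv : Kernel.Invariant κ μ) {f : X → ℝ} (hf : Measurable f) {C : ℝ}
    (hC : ∀ x, |f x| ≤ C) :
    ∫ x, ∫ y, f y ∂κ x ∂μ = ∫ x, f x ∂μ := by
  haveI hne : Nonempty X := by
    by_contra h
    rw [not_nonempty_iff] at h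
    have h1 : μ Set.univ = 1 := measure_univ
    simp [μ.eq_zero_of_isEmpty] at h1
  have hC0 : 0 ≤ C := le_trans (abs_nonneg _) (hC (Classical.arbitrary X))
  set h : X → ℝ := fun x => f x + C with hh
  have hh_meas : Measurable h := hf.add_const C
  have hh_nonneg : ∀ x, 0 ≤ h x := fun x => by
    have := (abs_le.mp (hC x)).1; simp only [hh]; linarith
  have hh_bdd : ∀ x, h x ≤ 2 * C := fun x => by
    have := (abs_le.mp (hC x)).2; simp only [hh]; linarith
  have hint_f : ∀ (ν : Measure X), IsProbabilityMeasure ν → Integrable f ν := fun ν hν =>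
    integrable_of_bounded hf.aestronglyMeasurable hC
  -- inner integral identity
  have step1 : ∀ (ν : Measure X), IsProbabilityMeasure ν →
      ∫ y, h y ∂ν = (∫ y, f y ∂ν) + C := by
    intro ν hν
    rw [hh]
    rw [integral_add (hint_f ν hν) (integrable_const C), integral_const, probReal_univ]
    simp
  -- lintegral machinery
  have hof_meas : Measurable fun y => ENNReal.ofReal (h y) := hh_meas.ennreal_ofReal
  have hlt : ∀ x : X, ∫⁻ y, ENNReal.ofReal (h y) ∂κ x < ⊤ := by
    intro x
    calc ∫⁻ y, ENNReal.ofReal (h y) ∂κ x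
        ≤ ∫⁻ _y, ENNReal.ofReal (2 * C) ∂κ x :=
          lintegral_mono fun y => ENNReal.ofReal_le_ofReal (hh_bdd y)
      _ = ENNReal.ofReal (2 * C) := by simp [lintegral_const, measure_univ]
      _ < ⊤ := ENNReal.ofReal_lt_top
  have meas_inner : Measurable fun x => ∫⁻ y, ENNReal.ofReal (h y) ∂κ x :=
    Measurable.lintegral_kernel hof_meas
  have eqh : ∫ x, ∫ y, h y ∂κ x ∂μ = ∫ x, h x ∂μ := by
    have e1 : ∫ x, ∫ y, h y ∂κ x ∂μ
        = ∫ x, (∫⁻ y, ENNReal.ofReal (h y) ∂κ x).toReal ∂μ := by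
      refine integral_congr_ae (Filter.Eventually.of_forall fun x => ?_)
      exact integral_eq_lintegral_of_nonneg_ae
        (Filter.Eventually.of_forall hh_nonneg) hh_meas.aestronglyMeasurable
    have e2 : ∫ x, (∫⁻ y, ENNReal.ofReal (h y) ∂κ x).toReal ∂μ
        = (∫⁻ x, ∫⁻ y, ENNReal.ofReal (h y) ∂κ x ∂μ).toReal :=
      integral_toReal meas_inner.aemeasurable (Filter.Eventually.of_forall hlt)
    have e3 : ∫⁻ x, ∫⁻ y, ENNReal.ofReal (h y) ∂κ x ∂μ
        = ∫⁻ y, ENNReal.ofReal (h y) ∂(μ.bind κ) :=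
      (Measure.lintegral_bind κ.measurable.aemeasurable hof_meas.aemeasurable).symm
    have e4 : ∫ x, h x ∂μ = (∫⁻ y, ENNReal.ofReal (h y) ∂μ).toReal :=
      integral_eq_lintegral_of_nonneg_ae
        (Filter.Eventually.of_forall hh_nonneg) hh_meas.aestronglyMeasurable
    rw [e1, e2, e3, hinv.def, ← e4]
  -- unshift
  have lhs_eq : ∫ x, ∫ y, h y ∂κ x ∂μ = (∫ x, ∫ y, f y ∂κ x ∂μ) + C := by
    have e5 : ∫ x, ∫ y, h y ∂κ x ∂μ = ∫ x, ((∫ y, f y ∂κ x) + C) ∂μ := by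
      refine integral_congr_ae (Filter.Eventually.of_forall fun x => ?_)
      exact step1 (κ x) inferInstance
    rw [e5]
    have hKf_meas : Measurable fun x => ∫ y, f y ∂κ x := measurable_kernel_integral κ hf
    have hKf_bdd : ∀ x, |∫ y, f y ∂κ x| ≤ C := fun x => abs_integral_le_of_bounded hC
    rw [integral_add (integrable_of_bounded hKf_meas.aestronglyMeasurable hKf_bdd)
      (integrable_const C), integral_const, probReal_univ]
    simp
  have rhs_eq : ∫ x, h x ∂μ = (∫ x, f x ∂μ) + C := step1 μ inferInstance
  rw [lhs_eq, rhs_eq] at eqh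
  linarith

private lemma abs_sub_le_two_mul {a b F : ℝ} (ha : |a| ≤ F) (hb : |b| ≤ F) :
    |a - b| ≤ 2 * F :=
  abs_le.mpr ⟨by linarith [(abs_le.mp ha).1, (abs_le.mp hb).2],
    by linarith [(abs_le.mp ha).2, (abs_le.mp hb).1]⟩

/-- Theorem 3.3 (combined bound): the IPM `D_G(μ_b, μ*)` between the behavior occupancy
measure and the occupancy measure of the evaluated policy under the true dynamics is
bounded by the Bellman-residual regularizer, the expected square-root-KL model error, and
the auxiliary residual term. -/
theorem ipm_behavior_le_residual_add_klTerm_add_residual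
    {X : Type*} [MeasurableSpace X]
    (κhat κstar : Kernel X X) [IsMarkovKernel κhat] [IsMarkovKernel κstar]
    (μhat : Measure X) [IsProbabilityMeasure μhat]
    (h_inv_hat : Kernel.Invariant κhat μhat)
    (μstar : Measure X) [IsProbabilityMeasure μstar]
    (h_inv_star : Kernel.Invariant κstar μstar)
    (μb : Measure X) [IsProbabilityMeasure μb]
    (G : Set (X → ℝ)) (hG_ne : G.Nonempty)
    (hG_meas : ∀ g ∈ G, Measurable g)
    (Gmax : ℝ) (hG_bdd : ∀ g ∈ G, ∀ x, |g x| ≤ Gmax)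
    (Φ : (X → ℝ) → (X → ℝ))
    (hΦ_meas : ∀ g ∈ G, Measurable (Φ g))
    (F : ℝ) (hF : 0 ≤ F) (hΦ_bdd : ∀ g ∈ G, ∀ x, |Φ g x| ≤ F)
    (hΦ_bellman : ∀ g ∈ G, ∀ x,
      Φ g x = g x + (∫ x', Φ g x' ∂(κhat x)) - ∫ z, g z ∂μhat)
    (Ψ : (X → ℝ) → (X → ℝ))
    (hΨ_meas : ∀ g ∈ G, Measurable (Ψ g))
    (hΨ_bdd : ∀ g ∈ G, ∃ C : ℝ, ∀ x, |Ψ g x| ≤ C)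
    (hΨ_bellman : ∀ g ∈ G, ∀ x,
      Ψ g x = ((∫ x', Φ g x' ∂(κhat x)) - ∫ x', Φ g x' ∂(κstar x))
        + (∫ x', Ψ g x' ∂(κstar x))
        - ∫ z, ((∫ x', Φ g x' ∂(κhat z)) - ∫ x', Φ g x' ∂(κstar z)) ∂μstar)
    (h_kl_fin : ∀ᵐ x ∂μb, KLdiv (κstar x) (κhat x) < ⊤)
    (h_kl_int : Integrable
      (fun x => Real.sqrt (2 * (KLdiv (κstar x) (κhat x)).toReal)) μb) :
    (⨆ g : G, |(∫ x, (g : X → ℝ) x ∂μb) - ∫ x, (g : X → ℝ) x ∂μstar|)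
      ≤ (⨆ g : G, |(∫ x, Φ g x ∂μb) - ∫ x, ∫ x', Φ (g : X → ℝ) x' ∂(κhat x) ∂μb|)
        + F * (∫ x, Real.sqrt (2 * (KLdiv (κstar x) (κhat x)).toReal) ∂μb)
        + ⨆ g : G, |(∫ x, Ψ g x ∂μb) - ∫ x, ∫ x', Ψ (g : X → ℝ) x' ∂(κstar x) ∂μb| := by
  haveI : Nonempty ↥G := hG_ne.to_subtype
  set K : ℝ := ∫ x, Real.sqrt (2 * (KLdiv (κstar x) (κhat x)).toReal) ∂μb with hK
  -- the combined per-element facts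
  have main : ∀ g ∈ G,
      |(∫ x, g x ∂μb) - ∫ x, g x ∂μstar|
        ≤ |(∫ x, Φ g x ∂μb) - ∫ x, ∫ x', Φ g x' ∂(κhat x) ∂μb| + F * K
          + |(∫ x, Ψ g x ∂μb) - ∫ x, ∫ x', Ψ g x' ∂(κstar x) ∂μb| ∧
      |(∫ x, Φ g x ∂μb) - ∫ x, ∫ x', Φ g x' ∂(κhat x) ∂μb| ≤ 2 * F ∧
      |(∫ x, Ψ g x ∂μb) - ∫ x, ∫ x', Ψ g x' ∂(κstar x) ∂μb| ≤ 4 * F := by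
    intro g hg
    have hgm := hG_meas g hg
    have hΦm := hΦ_meas g hg
    have hΦb := hΦ_bdd g hg
    have hΨm := hΨ_meas g hg
    obtain ⟨Cψ, hΨb⟩ := hΨ_bdd g hg
    -- kernel integrals
    have hKh_meas : Measurable fun x => ∫ x', Φ g x' ∂κhat x :=
      measurable_kernel_integral κhat hΦm
    have hKs_meas : Measurable fun x => ∫ x', Φ g x' ∂κstar x :=
      measurable_kernel_integral κstar hΦm
    have hPs_meas : Measurable fun x => ∫ x', Ψ g x' ∂κstar x :=
      measurable_kernel_integral κstar hΨm
    have hKh_bdd : ∀ x, |∫ x', Φ g x' ∂κhat x| ≤ F := fun x =>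
      abs_integral_le_of_bounded hΦb
    have hKs_bdd : ∀ x, |∫ x', Φ g x' ∂κstar x| ≤ F := fun x =>
      abs_integral_le_of_bounded hΦb
    have hPs_bdd : ∀ x, |∫ x', Ψ g x' ∂κstar x| ≤ Cψ := fun x =>
      abs_integral_le_of_bounded hΨb
    have he_bdd : ∀ x, |(∫ x', Φ g x' ∂κhat x) - ∫ x', Φ g x' ∂κstar x| ≤ 2 * F :=
      fun x => abs_sub_le_two_mul (hKh_bdd x) (hKs_bdd x)
    -- integrabilities
    have int_g : ∀ (ν : Measure X) [IsProbabilityMeasure ν], Integrable g ν := fun ν _ =>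
      integrable_of_bounded hgm.aestronglyMeasurable (hG_bdd g hg)
    have int_Φ : ∀ (ν : Measure X) [IsProbabilityMeasure ν], Integrable (Φ g) ν := fun ν _ =>
      integrable_of_bounded hΦm.aestronglyMeasurable hΦb
    have int_Ψ : ∀ (ν : Measure X) [IsProbabilityMeasure ν], Integrable (Ψ g) ν := fun ν _ =>
      integrable_of_bounded hΨm.aestronglyMeasurable hΨb
    have int_Kh : ∀ (ν : Measure X) [IsProbabilityMeasure ν],
        Integrable (fun x => ∫ x', Φ g x' ∂κhat x) ν := fun ν _ =>
      integrable_of_bounded hKh_meas.aestronglyMeasurable hKh_bdd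
    have int_Ks : ∀ (ν : Measure X) [IsProbabilityMeasure ν],
        Integrable (fun x => ∫ x', Φ g x' ∂κstar x) ν := fun ν _ =>
      integrable_of_bounded hKs_meas.aestronglyMeasurable hKs_bdd
    have int_Ps : ∀ (ν : Measure X) [IsProbabilityMeasure ν],
        Integrable (fun x => ∫ x', Ψ g x' ∂κstar x) ν := fun ν _ =>
      integrable_of_bounded hPs_meas.aestronglyMeasurable hPs_bdd
    set c : ℝ := ∫ z, g z ∂μhat with hc
    set d : ℝ := ∫ z, ((∫ x', Φ g x' ∂(κhat z)) - ∫ x', Φ g x' ∂(κstar z)) ∂μstar with hd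
    -- occupancy identities
    have hg_eq : ∀ x, g x = Φ g x - (∫ x', Φ g x' ∂κhat x) + c := fun x => by
      have := hΦ_bellman g hg x; linarith
    have split_g : ∀ (ν : Measure X) [IsProbabilityMeasure ν],
        ∫ x, g x ∂ν = ((∫ x, Φ g x ∂ν) - ∫ x, ∫ x', Φ g x' ∂κhat x ∂ν) + c := by
      intro ν _
      have i1 : Integrable (fun x => Φ g x - ∫ x', Φ g x' ∂κhat x) ν :=
        (int_Φ ν).sub (int_Kh ν)
      have e1 : ∫ x, g x ∂ν
          = ∫ x, ((Φ g x - (∫ x', Φ g x' ∂κhat x)) + c) ∂ν :=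
        integral_congr_ae (Filter.Eventually.of_forall fun x => hg_eq x)
      rw [e1, integral_add i1 (integrable_const c),
        integral_sub (int_Φ ν) (int_Kh ν), integral_const, probReal_univ]
      simp
    -- invariance for μstar
    have hinvΦ : ∫ x, ∫ x', Φ g x' ∂κstar x ∂μstar = ∫ x, Φ g x ∂μstar :=
      integral_invariant h_inv_star hΦm hΦb
    have d_eq : d = (∫ x, ∫ x', Φ g x' ∂κhat x ∂μstar)
        - ∫ x, ∫ x', Φ g x' ∂κstar x ∂μstar := by
      rw [hd, integral_sub (int_Kh μstar) (int_Ks μstar)]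
    have star_eq : ∫ x, g x ∂μstar = c - d := by
      rw [split_g μstar, d_eq, hinvΦ]; ring
    -- Ψ identity
    have he_eq : ∀ x, (∫ x', Φ g x' ∂κhat x) - (∫ x', Φ g x' ∂κstar x)
        = Ψ g x - (∫ x', Ψ g x' ∂κstar x) + d := fun x => by
      have := hΨ_bellman g hg x; rw [← hd] at this; linarith
    have he_int : ∫ x, ((∫ x', Φ g x' ∂κhat x) - ∫ x', Φ g x' ∂κstar x) ∂μb
        = ((∫ x, Ψ g x ∂μb) - ∫ x, ∫ x', Ψ g x' ∂κstar x ∂μb) + d := by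
      have i1 : Integrable (fun x => Ψ g x - ∫ x', Ψ g x' ∂κstar x) μb :=
        (int_Ψ μb).sub (int_Ps μb)
      have e1 : ∫ x, ((∫ x', Φ g x' ∂κhat x) - ∫ x', Φ g x' ∂κstar x) ∂μb
          = ∫ x, ((Ψ g x - (∫ x', Ψ g x' ∂κstar x)) + d) ∂μb :=
        integral_congr_ae (Filter.Eventually.of_forall fun x => he_eq x)
      rw [e1, integral_add i1 (integrable_const d),
        integral_sub (int_Ψ μb) (int_Ps μb), integral_const, probReal_univ]
      simp
    -- the E term and its Pinsker bound
    have hE_bound : |∫ x, ((∫ x', Φ g x' ∂κhat x) - ∫ x', Φ g x' ∂κstar x) ∂μb|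
        ≤ F * K := by
      have h1 : |∫ x, ((∫ x', Φ g x' ∂κhat x) - ∫ x', Φ g x' ∂κstar x) ∂μb|
          ≤ ∫ x, |(∫ x', Φ g x' ∂κhat x) - ∫ x', Φ g x' ∂κstar x| ∂μb := by
        simpa [Real.norm_eq_abs] using norm_integral_le_integral_norm (μ := μb)
          (fun x => (∫ x', Φ g x' ∂κhat x) - ∫ x', Φ g x' ∂κstar x)
      have h2 : ∫ x, |(∫ x', Φ g x' ∂κhat x) - ∫ x', Φ g x' ∂κstar x| ∂μb
          ≤ ∫ x, F * Real.sqrt (2 * (KLdiv (κstar x) (κhat x)).toReal) ∂μb := by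
        have i1 : Integrable (fun x => (∫ x', Φ g x' ∂κhat x) - ∫ x', Φ g x' ∂κstar x) μb :=
          (int_Kh μb).sub (int_Ks μb)
        refine integral_mono_ae i1.abs (h_kl_int.const_mul F) ?_
        filter_upwards [h_kl_fin] with x hx
        exact pinsker_bound (κstar x) (κhat x) hΦm hF hΦb hx
      have h3 : ∫ x, F * Real.sqrt (2 * (KLdiv (κstar x) (κhat x)).toReal) ∂μb
          = F * K := by rw [hK, integral_const_mul]
      linarith
    -- |d| ≤ 2F
    have hd_bdd : |d| ≤ 2 * F := by
      rw [hd]; exact abs_integral_le_of_bounded he_bdd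
    -- C term equality and bound
    have hC_eq : (∫ x, Ψ g x ∂μb) - ∫ x, ∫ x', Ψ g x' ∂κstar x ∂μb
        = ∫ x, (((∫ x', Φ g x' ∂κhat x) - ∫ x', Φ g x' ∂κstar x) - d) ∂μb := by
      rw [← integral_sub (int_Ψ μb) (int_Ps μb)]
      refine integral_congr_ae (Filter.Eventually.of_forall fun x => ?_)
      have := he_eq x; dsimp only; linarith
    have hC_bdd : |(∫ x, Ψ g x ∂μb) - ∫ x, ∫ x', Ψ g x' ∂κstar x ∂μb| ≤ 4 * F := by
      rw [hC_eq]
      have : ∀ x, |((∫ x', Φ g x' ∂κhat x) - ∫ x', Φ g x' ∂κstar x) - d| ≤ 4 * F := by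
        intro x
        have h1 := he_bdd x
        have h2 := hd_bdd
        have := abs_sub (((∫ x', Φ g x' ∂κhat x) - ∫ x', Φ g x' ∂κstar x)) d
        calc |((∫ x', Φ g x' ∂κhat x) - ∫ x', Φ g x' ∂κstar x) - d|
            ≤ |(∫ x', Φ g x' ∂κhat x) - ∫ x', Φ g x' ∂κstar x| + |d| := abs_sub _ _
          _ ≤ 4 * F := by linarith
      exact abs_integral_le_of_bounded this
    -- A bound
    have hA_bdd : |(∫ x, Φ g x ∂μb) - ∫ x, ∫ x', Φ g x' ∂κhat x ∂μb| ≤ 2 * F :=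
      abs_sub_le_two_mul (abs_integral_le_of_bounded hΦb)
        (abs_integral_le_of_bounded hKh_bdd)
    -- combine everything
    have key : |(∫ x, g x ∂μb) - ∫ x, g x ∂μstar|
        ≤ |(∫ x, Φ g x ∂μb) - ∫ x, ∫ x', Φ g x' ∂(κhat x) ∂μb| + F * K
          + |(∫ x, Ψ g x ∂μb) - ∫ x, ∫ x', Ψ g x' ∂(κstar x) ∂μb| := by
      have hdiff : (∫ x, g x ∂μb) - ∫ x, g x ∂μstar
          = ((∫ x, Φ g x ∂μb) - ∫ x, ∫ x', Φ g x' ∂κhat x ∂μb)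
            + (∫ x, ((∫ x', Φ g x' ∂κhat x) - ∫ x', Φ g x' ∂κstar x) ∂μb)
            - ((∫ x, Ψ g x ∂μb) - ∫ x, ∫ x', Ψ g x' ∂κstar x ∂μb) := by
        rw [split_g μb, star_eq, he_int]; ring
      rw [hdiff]
      calc |((∫ x, Φ g x ∂μb) - ∫ x, ∫ x', Φ g x' ∂κhat x ∂μb)
            + (∫ x, ((∫ x', Φ g x' ∂κhat x) - ∫ x', Φ g x' ∂κstar x) ∂μb)
            - ((∫ x, Ψ g x ∂μb) - ∫ x, ∫ x', Ψ g x' ∂κstar x ∂μb)|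
          ≤ |((∫ x, Φ g x ∂μb) - ∫ x, ∫ x', Φ g x' ∂κhat x ∂μb)
            + (∫ x, ((∫ x', Φ g x' ∂κhat x) - ∫ x', Φ g x' ∂κstar x) ∂μb)|
            + |(∫ x, Ψ g x ∂μb) - ∫ x, ∫ x', Ψ g x' ∂κstar x ∂μb| := abs_sub _ _
        _ ≤ |(∫ x, Φ g x ∂μb) - ∫ x, ∫ x', Φ g x' ∂κhat x ∂μb|
            + |∫ x, ((∫ x', Φ g x' ∂κhat x) - ∫ x', Φ g x' ∂κstar x) ∂μb|
            + |(∫ x, Ψ g x ∂μb) - ∫ x, ∫ x', Ψ g x' ∂κstar x ∂μb| := by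
            have := abs_add_le ((∫ x, Φ g x ∂μb) - ∫ x, ∫ x', Φ g x' ∂κhat x ∂μb)
              (∫ x, ((∫ x', Φ g x' ∂κhat x) - ∫ x', Φ g x' ∂κstar x) ∂μb)
            linarith
        _ ≤ |(∫ x, Φ g x ∂μb) - ∫ x, ∫ x', Φ g x' ∂κhat x ∂μb| + F * K
            + |(∫ x, Ψ g x ∂μb) - ∫ x, ∫ x', Ψ g x' ∂κstar x ∂μb| := by
            linarith
    exact ⟨key, hA_bdd, hC_bdd⟩
  -- assemble suprema
  have bddA : BddAbove (Set.range fun g : G =>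
      |(∫ x, Φ g x ∂μb) - ∫ x, ∫ x', Φ (g : X → ℝ) x' ∂(κhat x) ∂μb|) := by
    refine ⟨2 * F, ?_⟩
    rintro y ⟨g, rfl⟩
    exact (main g g.2).2.1
  have bddC : BddAbove (Set.range fun g : G =>
      |(∫ x, Ψ g x ∂μb) - ∫ x, ∫ x', Ψ (g : X → ℝ) x' ∂(κstar x) ∂μb|) := by
    refine ⟨4 * F, ?_⟩
    rintro y ⟨g, rfl⟩
    exact (main g g.2).2.2
  refine ciSup_le fun g => ?_
  calc |(∫ x, (g : X → ℝ) x ∂μb) - ∫ x, (g : X → ℝ) x ∂μstar|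
      ≤ |(∫ x, Φ g x ∂μb) - ∫ x, ∫ x', Φ (g : X → ℝ) x' ∂(κhat x) ∂μb| + F * K
        + |(∫ x, Ψ g x ∂μb) - ∫ x, ∫ x', Ψ (g : X → ℝ) x' ∂(κstar x) ∂μb| :=
      (main g g.2).1
    _ ≤ (⨆ g : G, |(∫ x, Φ g x ∂μb) - ∫ x, ∫ x', Φ (g : X → ℝ) x' ∂(κhat x) ∂μb|)
        + F * K
        + ⨆ g : G, |(∫ x, Ψ g x ∂μb) - ∫ x, ∫ x', Ψ (g : X → ℝ) x' ∂(κstar x) ∂μb| := by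
      have h1 := le_ciSup bddA g
      have h2 := le_ciSup bddC g
      exact add_le_add (add_le_add h1 le_rfl) h2
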